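/- Let G be a disperse ℓ-uniform hypergraph (ℓ ≥ 3), and let A₁, A₂ ⊆ V(G) with |A₁| = |A₂| = ℓ−1 and |A₁ ∩ A₂| = ℓ−2. If there is a tight walk between A₁ and A₂ in G, then there is such a tight walk consisting of at most two edges. -/

import Mathlib

open Finset

/-- An `ℓ`-uniform hypergraph (given by its edge set `E`) is disperse if every
`(ℓ+1)`-set of vertices induces `0`, `1`, `ℓ` or `ℓ+1` edges. -/
def Disperse {V : Type*} [DecidableEq V] (ℓ : ℕ) (E : Finset (Finset V)) : Prop :=
  ∀ X : Finset V, X.card = ℓ + 1 →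
    (E.filter (· ⊆ X)).card = 0 ∨ (E.filter (· ⊆ X)).card = 1 ∨
    (E.filter (· ⊆ X)).card = ℓ ∨ (E.filter (· ⊆ X)).card = ℓ + 1

/-- Edge set of the link of a vertex `v`: all `(ℓ-1)`-sets `e` with `e ∪ {v} ∈ E`. -/
def linkEdges {V : Type*} [DecidableEq V] (E : Finset (Finset V)) (v : V) :
    Finset (Finset V) :=
  (E.filter (fun e => v ∈ e)).image (fun e => e.erase v)

/-- `A` and `B` are connected by a tight walk in the `k`-uniform hypergraph with
edge set `E`: there is a sequence of edges, consecutive ones sharing at least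
`k - 1` vertices, whose first edge contains `A` and last edge contains `B`. -/
def TightConn {V : Type*} [DecidableEq V] (k : ℕ) (E : Finset (Finset V))
    (A B : Finset V) : Prop :=
  ∃ es : List (Finset V), ∃ h : es ≠ [],
    (∀ e ∈ es, e ∈ E) ∧ es.Chain' (fun a b => k - 1 ≤ (a ∩ b).card) ∧
    A ⊆ es.head h ∧ B ⊆ es.getLast h

namespace TW

variable {V : Type*} [DecidableEq V]

lemma mem_link {E : Finset (Finset V)} {z : V} {h : Finset V} :
    h ∈ linkEdges E z ↔ z ∉ h ∧ insert z h ∈ E := by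
  constructor
  · rintro hm
    simp only [linkEdges, mem_image, mem_filter] at hm
    obtain ⟨e, ⟨heE, hz⟩, rfl⟩ := hm
    exact ⟨notMem_erase _ _, by rwa [insert_erase hz]⟩
  · rintro ⟨hz, hins⟩
    simp only [linkEdges, mem_image, mem_filter]
    exact ⟨insert z h, ⟨hins, mem_insert_self _ _⟩, by rw [erase_insert hz]⟩

lemma link_unif {ℓ : ℕ} {E : Finset (Finset V)} (hunif : ∀ e ∈ E, e.card = ℓ)
    {z : V} {h : Finset V} (hm : h ∈ linkEdges E z) : h.card = ℓ - 1 := by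
  obtain ⟨hz, hins⟩ := mem_link.1 hm
  have := hunif _ hins
  rw [card_insert_of_notMem hz] at this
  omega

/-- Key dispersion pigeonhole: two distinct edges in an (ℓ+1)-set `X` force
at least one of two distinct prescribed ℓ-subsets of `X` to be an edge. -/
lemma key {ℓ : ℕ} (hℓ : 3 ≤ ℓ) {E : Finset (Finset V)}
    (hunif : ∀ e ∈ E, e.card = ℓ) (hdisp : Disperse ℓ E)
    {X e f g h' : Finset V} (hX : X.card = ℓ + 1)
    (he : e ∈ E) (hf : f ∈ E) (hef : e ≠ f) (heX : e ⊆ X) (hfX : f ⊆ X)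
    (hg : g ⊆ X) (hgc : g.card = ℓ) (hh : h' ⊆ X) (hhc : h'.card = ℓ)
    (hgh : g ≠ h') : g ∈ E ∨ h' ∈ E := by
  by_contra hc
  push_neg at hc
  obtain ⟨hg1, hh1⟩ := hc
  have hgp : g ∈ X.powersetCard ℓ := mem_powersetCard.2 ⟨hg, hgc⟩
  have hhp : h' ∈ (X.powersetCard ℓ).erase g :=
    mem_erase.2 ⟨fun hh2 => hgh hh2.symm, mem_powersetCard.2 ⟨hh, hhc⟩⟩
  have hsub : E.filter (· ⊆ X) ⊆ ((X.powersetCard ℓ).erase g).erase h' := by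
    intro m hm
    rw [mem_filter] at hm
    refine mem_erase.2 ⟨fun hmh => ?_, mem_erase.2 ⟨fun hmg => ?_, ?_⟩⟩
    · exact hh1 (hmh ▸ hm.1)
    · exact hg1 (hmg ▸ hm.1)
    · exact mem_powersetCard.2 ⟨hm.2, hunif _ hm.1⟩
  have hcard1 : (E.filter (· ⊆ X)).card ≤ ℓ - 1 := by
    have h1 := card_le_card hsub
    rw [card_erase_of_mem hhp, card_erase_of_mem hgp, card_powersetCard, hX,
      Nat.choose_succ_self_right] at h1
    omega
  have h2 : 2 ≤ (E.filter (· ⊆ X)).card := by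
    have hsub2 : ({e, f} : Finset (Finset V)) ⊆ E.filter (· ⊆ X) := by
      intro m hm
      rcases mem_insert.1 hm with rfl | hm
      · exact mem_filter.2 ⟨he, heX⟩
      · rw [mem_singleton] at hm; subst hm; exact mem_filter.2 ⟨hf, hfX⟩
    have := card_le_card hsub2
    rwa [card_insert_of_notMem (by simpa using hef), card_singleton] at this
  rcases hdisp X hX with h0 | h1 | hl | hl1 <;> omega

/-- Convenient form: at least one of `(e ∪ f).erase d₁`, `(e ∪ f).erase d₂` is an edge. -/
lemma key2 {ℓ : ℕ} (hℓ : 3 ≤ ℓ) {E : Finset (Finset V)}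
    (hunif : ∀ e ∈ E, e.card = ℓ) (hdisp : Disperse ℓ E)
    {e f : Finset V} (he : e ∈ E) (hf : f ∈ E) (hef : e ≠ f)
    (hcap : ℓ - 1 ≤ (e ∩ f).card) {d₁ d₂ : V}
    (hd₁ : d₁ ∈ e ∪ f) (hd₂ : d₂ ∈ e ∪ f) (hd : d₁ ≠ d₂) :
    (e ∪ f).erase d₁ ∈ E ∨ (e ∪ f).erase d₂ ∈ E := by
  have hce := hunif _ he
  have hcf := hunif _ hf
  have hcap' : (e ∩ f).card = ℓ - 1 := by
    refine le_antisymm ?_ hcap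
    by_contra hlt
    push_neg at hlt
    have h1 : ℓ ≤ (e ∩ f).card := by omega
    have h2 : (e ∩ f).card ≤ e.card := card_le_card inter_subset_left
    have : e ∩ f = e := eq_of_subset_of_card_le inter_subset_left (by omega)
    have hef2 : e ⊆ f := by rw [← this]; exact inter_subset_right
    exact hef (eq_of_subset_of_card_le hef2 (by omega))
  have hXc : (e ∪ f).card = ℓ + 1 := by
    have := card_union_add_card_inter e f
    omega
  have h1 : ((e ∪ f).erase d₁).card = ℓ := by rw [card_erase_of_mem hd₁, hXc]; omega
  have h2 : ((e ∪ f).erase d₂).card = ℓ := by rw [card_erase_of_mem hd₂, hXc]; omega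
  refine key hℓ hunif hdisp hXc he hf hef subset_union_left subset_union_right
    (erase_subset _ _) h1 (erase_subset _ _) h2 ?_
  intro hcontra
  have : d₂ ∈ (e ∪ f).erase d₁ := mem_erase.2 ⟨hd.symm, hd₂⟩
  rw [hcontra] at this
  exact (notMem_erase _ _) this

/-- From two adjacent distinct edges, extract the unique new vertex. -/
lemma exists_new {ℓ : ℕ} {e f : Finset V} (hce : e.card = ℓ) (hcf : f.card = ℓ)
    (hcap : ℓ - 1 ≤ (e ∩ f).card) (hef : e ≠ f) (hl : 1 ≤ ℓ) :
    ∃ β, β ∈ f ∧ β ∉ e ∧ f.erase β = f ∩ e := by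
  have hcap' : (e ∩ f).card = ℓ - 1 := by
    refine le_antisymm ?_ hcap
    by_contra hlt
    push_neg at hlt
    have h2 : (e ∩ f).card ≤ e.card := card_le_card inter_subset_left
    have : e ∩ f = e := eq_of_subset_of_card_le inter_subset_left (by omega)
    have hef2 : e ⊆ f := by rw [← this]; exact inter_subset_right
    exact hef (eq_of_subset_of_card_le hef2 (by omega))
  have hdiff : (f \ e).card = 1 := by
    have := card_sdiff_add_card_inter f e
    rw [inter_comm] at hcap'
    omega
  obtain ⟨β, hβ⟩ := card_eq_one.1 hdiff
  have hβf : β ∈ f := by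
    have : β ∈ f \ e := hβ ▸ mem_singleton_self β
    exact (mem_sdiff.1 this).1
  have hβe : β ∉ e := by
    have : β ∈ f \ e := hβ ▸ mem_singleton_self β
    exact (mem_sdiff.1 this).2
  refine ⟨β, hβf, hβe, ?_⟩
  ext x
  simp only [mem_erase, mem_inter]
  constructor
  · rintro ⟨hxβ, hxf⟩
    refine ⟨hxf, ?_⟩
    by_contra hxe
    have : x ∈ f \ e := mem_sdiff.2 ⟨hxf, hxe⟩
    rw [hβ, mem_singleton] at this
    exact hxβ this
  · rintro ⟨hxf, hxe⟩
    exact ⟨fun hx => hβe (hx ▸ hxe), hxf⟩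


def Adj (m : ℕ) (Λ : Finset (Finset V)) (a b : Finset V) : Prop :=
  b ∈ Λ ∧ m ≤ (a ∩ b).card

def Conn (m : ℕ) (Λ : Finset (Finset V)) (a b : Finset V) : Prop :=
  a ∈ Λ ∧ Relation.ReflTransGen (Adj m Λ) a b

lemma conn_refl {m : ℕ} {Λ : Finset (Finset V)} {a : Finset V} (ha : a ∈ Λ) :
    Conn m Λ a a := ⟨ha, Relation.ReflTransGen.refl⟩

lemma Conn.mem_left {m : ℕ} {Λ : Finset (Finset V)} {a b : Finset V}
    (h : Conn m Λ a b) : a ∈ Λ := h.1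

lemma Conn.mem_right {m : ℕ} {Λ : Finset (Finset V)} {a b : Finset V}
    (h : Conn m Λ a b) : b ∈ Λ := by
  obtain ⟨ha, hr⟩ := h
  induction hr with
  | refl => exact ha
  | tail _ hadj _ => exact hadj.1

lemma Conn.tail' {m : ℕ} {Λ : Finset (Finset V)} {a b c : Finset V}
    (h : Conn m Λ a b) (hc : c ∈ Λ) (hbc : m ≤ (b ∩ c).card) : Conn m Λ a c :=
  ⟨h.1, h.2.tail ⟨hc, hbc⟩⟩

lemma Conn.trans' {m : ℕ} {Λ : Finset (Finset V)} {a b c : Finset V}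
    (h : Conn m Λ a b) (h' : Conn m Λ b c) : Conn m Λ a c :=
  ⟨h.1, h.2.trans h'.2⟩

lemma Conn.symm' {m : ℕ} {Λ : Finset (Finset V)} {a b : Finset V}
    (h : Conn m Λ a b) : Conn m Λ b a := by
  obtain ⟨ha, hr⟩ := h
  induction hr with
  | refl => exact conn_refl ha
  | tail hr hadj ih =>
      refine ⟨hadj.1, Relation.ReflTransGen.head ⟨ih.1, ?_⟩ ih.2⟩
      rw [inter_comm]; exact hadj.2

/-- Links of disperse hypergraphs are disperse (one level down). -/
lemma link_disperse {ℓ : ℕ} (hℓ : 3 ≤ ℓ) {E : Finset (Finset V)}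
    (hunif : ∀ e ∈ E, e.card = ℓ) (hdisp : Disperse ℓ E) (z : V) :
    Disperse (ℓ - 1) (linkEdges E z) := by
  intro X hX
  have hX' : X.card = ℓ := by omega
  by_cases hzX : z ∈ X
  · -- every member equals X.erase z, so at most one
    have hle : ((linkEdges E z).filter (· ⊆ X)).card ≤ 1 := by
      refine card_le_one.2 ?_
      intro a ha b hb
      rw [mem_filter] at ha hb
      have hcard : ∀ c : Finset V, c ∈ linkEdges E z → c ⊆ X → c = X.erase z := by
        intro c hc hcX
        have h1 : c ⊆ X.erase z := fun x hx =>
          mem_erase.2 ⟨fun he => (mem_link.1 hc).1 (he ▸ hx), hcX hx⟩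
        refine eq_of_subset_of_card_le h1 ?_
        rw [card_erase_of_mem hzX, hX', link_unif hunif hc]
      rw [hcard a ha.1 ha.2, hcard b hb.1 hb.2]
    have h01 : ((linkEdges E z).filter (· ⊆ X)).card = 0 ∨
        ((linkEdges E z).filter (· ⊆ X)).card = 1 := by omega
    tauto
  · have hins : (insert z X).card = ℓ + 1 := by rw [card_insert_of_notMem hzX]; omega
    have hdT := hdisp (insert z X) hins
    have hsplit := card_filter_add_card_filter_not
      (s := E.filter (· ⊆ insert z X)) (p := fun e => z ∈ e)
    have hT2 : ((E.filter (· ⊆ insert z X)).filter (fun e => ¬ z ∈ e)).card ≤ 1 := by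
      refine card_le_one.2 ?_
      intro a ha b hb
      rw [mem_filter, mem_filter] at ha hb
      have key : ∀ c : Finset V, c ∈ E → c ⊆ insert z X → z ∉ c → c = X := by
        intro c hc1 hc2 hc3
        have hcX : c ⊆ X := by
          intro x hx
          rcases mem_insert.1 (hc2 hx) with rfl | hxX
          · exact absurd hx hc3
          · exact hxX
        exact eq_of_subset_of_card_le hcX (by rw [hX', hunif _ hc1])
      rw [key a ha.1.1 ha.1.2 ha.2, key b hb.1.1 hb.1.2 hb.2]
    have hbij : ((linkEdges E z).filter (· ⊆ X)).card =
        ((E.filter (· ⊆ insert z X)).filter (fun e => z ∈ e)).card := by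
      refine card_bij (fun h _ => insert z h) ?_ ?_ ?_
      · intro a ha
        rw [mem_filter] at ha
        obtain ⟨hza, hins'⟩ := mem_link.1 ha.1
        refine mem_filter.2 ⟨mem_filter.2 ⟨hins', ?_⟩, mem_insert_self _ _⟩
        exact insert_subset_insert _ ha.2
      · intro a ha b hb hab
        rw [mem_filter] at ha hb
        have hza := (mem_link.1 ha.1).1
        have hzb := (mem_link.1 hb.1).1
        have := congrArg (fun s => Finset.erase s z) hab
        simpa [erase_insert hza, erase_insert hzb] using this
      · intro e he
        rw [mem_filter, mem_filter] at he
        obtain ⟨⟨heE, hesub⟩, hze⟩ := he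
        refine ⟨e.erase z, mem_filter.2 ⟨mem_link.2 ⟨notMem_erase _ _, by
          rwa [insert_erase hze]⟩, ?_⟩, insert_erase hze⟩
        intro x hx
        rw [mem_erase] at hx
        rcases mem_insert.1 (hesub hx.2) with rfl | hxX
        · exact absurd rfl hx.1
        · exact hxX
    have hLle : ((linkEdges E z).filter (· ⊆ X)).card ≤ ℓ := by
      have hsub : (linkEdges E z).filter (· ⊆ X) ⊆ X.powersetCard (ℓ - 1) := by
        intro a ha
        rw [mem_filter] at ha
        exact mem_powersetCard.2 ⟨ha.2, link_unif hunif ha.1⟩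
      have h1 := card_le_card hsub
      rw [card_powersetCard, hX'] at h1
      have h2 : ℓ.choose (ℓ - 1) = ℓ := by
        have h3 : ℓ - 1 + 1 = ℓ := by omega
        calc ℓ.choose (ℓ - 1) = (ℓ - 1 + 1).choose (ℓ - 1) := by rw [h3]
        _ = ℓ - 1 + 1 := Nat.choose_succ_self_right _
        _ = ℓ := h3
      omega
    simp only [hbij]
    omega

def InnerProp (ℓ : ℕ) (E : Finset (Finset V)) (z : V) : Prop :=
  ∀ h₁ h₂ Q : Finset V, ∀ a₁ a₂ : V,
    Conn (ℓ-2) (linkEdges E z) h₁ h₂ → Q.card = ℓ - 3 →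
    a₁ ∉ Q → a₂ ∉ Q → a₁ ≠ a₂ →
    insert a₁ Q ⊆ h₁ → insert a₂ Q ⊆ h₂ →
    ∃ k₁ ∈ linkEdges E z, ∃ k₂ ∈ linkEdges E z,
      insert a₁ Q ⊆ k₁ ∧ insert a₂ Q ⊆ k₂ ∧ ℓ - 2 ≤ (k₁ ∩ k₂).card

def Inv (ℓ : ℕ) (E : Finset (Finset V)) (z : V) (h₀ e : Finset V) : Prop :=
  (z ∈ e ∧ Conn (ℓ-2) (linkEdges E z) h₀ (e.erase z)) ∨
  (z ∉ e ∧ ∀ P ⊆ e, P.card = ℓ - 2 →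
      ∃ h, Conn (ℓ-2) (linkEdges E z) h₀ h ∧ P ⊆ h)

lemma prop_step {ℓ : ℕ} (hℓ : 3 ≤ ℓ) {E : Finset (Finset V)}
    (hunif : ∀ e ∈ E, e.card = ℓ) (hdisp : Disperse ℓ E) (z : V)
    (hIN : InnerProp ℓ E z) (h₀ : Finset V)
    {e f : Finset V} (he : e ∈ E) (hf : f ∈ E) (hcap : ℓ - 1 ≤ (e ∩ f).card)
    (hinv : Inv ℓ E z h₀ e) : Inv ℓ E z h₀ f := by
  by_cases hef : e = f
  · exact hef ▸ hinv
  obtain ⟨β, hβf, hβe, hfe⟩ :=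
    exists_new (hunif _ he) (hunif _ hf) hcap hef (by omega)
  have hfc := hunif _ hf
  have hec := hunif _ he
  by_cases hzf : z ∈ f
  · by_cases hze : z ∈ e
    · -- case 1 : z in both
      rcases hinv with ⟨_, hconn⟩ | ⟨hze', _⟩
      swap
      · exact absurd hze hze'
      left
      refine ⟨hzf, hconn.tail' (mem_link.2 ⟨notMem_erase _ _, by rwa [insert_erase hzf]⟩) ?_⟩
      have hsub : (e ∩ f).erase z ⊆ e.erase z ∩ f.erase z := by
        intro x hx
        simp only [mem_erase, mem_inter] at hx ⊢
        tauto
      have h1 : ((e ∩ f).erase z).card = (e ∩ f).card - 1 :=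
        card_erase_of_mem (mem_inter.2 ⟨hze, hzf⟩)
      have := card_le_card hsub
      omega
    · -- case 3 : z ∈ f, z ∉ e, so β = z
      have hβz : β = z := by
        by_contra hne
        have : z ∈ f.erase β := mem_erase.2 ⟨fun hzz => hne hzz.symm, hzf⟩
        rw [hfe] at this
        exact hze (mem_inter.1 this).2
      rcases hinv with ⟨hze', _⟩ | ⟨_, hcov⟩
      · exact absurd hze' hze
      left
      refine ⟨hzf, ?_⟩
      have hfΛ : f.erase z ∈ linkEdges E z :=
        mem_link.2 ⟨notMem_erase _ _, by rwa [insert_erase hzf]⟩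
      have hfez : f.erase z = f ∩ e := by rw [← hβz]; exact hfe
      have hfec : (f.erase z).card = ℓ - 1 := by rw [card_erase_of_mem hzf]; omega
      obtain ⟨P₀, hP₀sub, hP₀c⟩ :=
        Finset.exists_subset_card_eq (s := f.erase z) (n := ℓ - 2) (by omega)
      have hP₀e : P₀ ⊆ e := by
        intro x hx
        have := hP₀sub hx
        rw [hfez] at this
        exact (mem_inter.1 this).2
      obtain ⟨h, hhC, hPh⟩ := hcov P₀ hP₀e hP₀c
      refine hhC.tail' hfΛ ?_
      have : P₀ ⊆ h ∩ f.erase z := subset_inter hPh hP₀sub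
      have := card_le_card this
      omega
  · by_cases hze : z ∈ e
    · -- case 2 : z ∈ e, z ∉ f
      rcases hinv with ⟨_, hconn⟩ | ⟨hze', _⟩
      swap
      · exact absurd hze hze'
      right
      refine ⟨hzf, ?_⟩
      intro P hPf hPc
      by_cases hβP : β ∈ P
      · set Q := P.erase β with hQdef
        have hQc : Q.card = ℓ - 3 := by rw [hQdef, card_erase_of_mem hβP]; omega
        have hQe : Q ⊆ e.erase z := by
          intro x hx
          rw [hQdef, mem_erase] at hx
          have hxfe : x ∈ f.erase β := mem_erase.2 ⟨hx.1, hPf hx.2⟩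
          rw [hfe] at hxfe
          exact mem_erase.2 ⟨fun hh => hzf (hh ▸ hPf hx.2), (mem_inter.1 hxfe).2⟩
        have hezc : (e.erase z).card = ℓ - 1 := by rw [card_erase_of_mem hze]; omega
        have hsd : ((e.erase z) \ Q).card = 2 := by
          rw [card_sdiff_of_subset hQe]; omega
        obtain ⟨a₁, a₂, ha12, hseq⟩ := card_eq_two.1 hsd
        have ha₁ : a₁ ∈ (e.erase z) \ Q := by rw [hseq]; simp
        have ha₂ : a₂ ∈ (e.erase z) \ Q := by rw [hseq]; simp
        have hK : ∃ a ∈ (e.erase z) \ Q, (e ∪ f).erase a ∈ E := by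
          have h₁ : a₁ ∈ e ∪ f := mem_union_left _ (mem_erase.1 (mem_sdiff.1 ha₁).1).2
          have h₂ : a₂ ∈ e ∪ f := mem_union_left _ (mem_erase.1 (mem_sdiff.1 ha₂).1).2
          rcases key2 hℓ hunif hdisp he hf hef hcap h₁ h₂ ha12 with hm | hm
          · exact ⟨a₁, ha₁, hm⟩
          · exact ⟨a₂, ha₂, hm⟩
        obtain ⟨a, ha, hmE⟩ := hK
        rw [mem_sdiff, mem_erase] at ha
        obtain ⟨⟨haz, hae⟩, haQ⟩ := ha
        have hzm : z ∈ (e ∪ f).erase a :=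
          mem_erase.2 ⟨fun hh => haz hh.symm, mem_union_left _ hze⟩
        have hmΛ : ((e ∪ f).erase a).erase z ∈ linkEdges E z :=
          mem_link.2 ⟨notMem_erase _ _, by rwa [insert_erase hzm]⟩
        refine ⟨((e ∪ f).erase a).erase z, hconn.tail' hmΛ ?_, ?_⟩
        · have hsub : (e.erase z).erase a ⊆
              (e.erase z) ∩ (((e ∪ f).erase a).erase z) := by
            intro x hx
            simp only [mem_erase, mem_union, mem_inter] at hx ⊢
            exact ⟨⟨hx.2.1, hx.2.2⟩, hx.2.1, hx.1, Or.inl hx.2.2⟩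
          have h1 := card_le_card hsub
          have h2 : ((e.erase z).erase a).card = ℓ - 2 := by
            rw [card_erase_of_mem (mem_erase.2 ⟨haz, hae⟩)]; omega
          omega
        · intro x hx
          have hxf : x ∈ f := hPf hx
          have hxz : x ≠ z := fun hh => hzf (hh ▸ hxf)
          have hxa : x ≠ a := by
            rintro rfl
            rcases eq_or_ne x β with rfl | hxβ
            · exact hβe hae
            · exact haQ (mem_erase.2 ⟨hxβ, hx⟩)
          simp only [mem_erase, mem_union]
          exact ⟨hxz, hxa, Or.inr (hPf hx)⟩
      · -- β ∉ P : P lives in e, use e.erase z itself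
        refine ⟨e.erase z, hconn, ?_⟩
        intro x hx
        have hxfe : x ∈ f.erase β := mem_erase.2 ⟨fun hh => hβP (hh ▸ hx), hPf hx⟩
        rw [hfe] at hxfe
        exact mem_erase.2 ⟨fun hh => hzf (hh ▸ hPf hx), (mem_inter.1 hxfe).2⟩
    · -- case 4 : z ∉ e, z ∉ f
      rcases hinv with ⟨hze', _⟩ | ⟨_, hcov⟩
      · exact absurd hze' hze
      right
      refine ⟨hzf, ?_⟩
      intro P hPf hPc
      by_cases hβP : β ∈ P
      swap
      · refine hcov P ?_ hPc
        intro x hx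
        have hxfe : x ∈ f.erase β := mem_erase.2 ⟨fun hh => hβP (hh ▸ hx), hPf hx⟩
        rw [hfe] at hxfe
        exact (mem_inter.1 hxfe).2
      -- the interesting case: β ∈ P
      have hβz : β ≠ z := fun hh => hzf (hh ▸ hβf)
      set Q := P.erase β with hQdef
      have hβQ : β ∉ Q := notMem_erase _ _
      have hQP : Q ⊆ P := erase_subset _ _
      have hQf : Q ⊆ f := hQP.trans hPf
      have hQc : Q.card = ℓ - 3 := by rw [hQdef, card_erase_of_mem hβP]; omega
      have hzQ : z ∉ Q := fun hh => hzf (hQf hh)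
      have hQfβ : Q ⊆ f.erase β := fun x hx =>
        mem_erase.2 ⟨fun hh => hβQ (hh ▸ hx), hQf hx⟩
      have hQe : Q ⊆ e := by
        intro x hx
        have := hQfβ hx
        rw [hfe] at this
        exact (mem_inter.1 this).2
      have hPQβ : ∀ x ∈ P, x = β ∨ x ∈ Q := by
        intro x hx
        rcases eq_or_ne x β with rfl | hxβ
        · exact Or.inl rfl
        · exact Or.inr (mem_erase.2 ⟨hxβ, hx⟩)
      have hfβc : (f.erase β).card = ℓ - 1 := by rw [card_erase_of_mem hβf]; omega
      have hsd : ((f.erase β) \ Q).card = 2 := by rw [card_sdiff_of_subset hQfβ]; omega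
      obtain ⟨a₁, a₂, ha12, hseq⟩ := card_eq_two.1 hsd
      have ha₁mem : a₁ ∈ (f.erase β) \ Q := by rw [hseq]; simp
      have ha₂mem : a₂ ∈ (f.erase β) \ Q := by rw [hseq]; simp
      obtain ⟨ha₁fβ, ha₁Q⟩ := mem_sdiff.1 ha₁mem
      obtain ⟨ha₂fβ, ha₂Q⟩ := mem_sdiff.1 ha₂mem
      obtain ⟨ha₁β, ha₁f⟩ := mem_erase.1 ha₁fβ
      obtain ⟨ha₂β, ha₂f⟩ := mem_erase.1 ha₂fβ
      have ha₁e : a₁ ∈ e := by have := ha₁fβ; rw [hfe] at this; exact (mem_inter.1 this).2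
      have ha₂e : a₂ ∈ e := by have := ha₂fβ; rw [hfe] at this; exact (mem_inter.1 this).2
      have ha₁z : a₁ ≠ z := fun hh => hzf (hh ▸ ha₁f)
      have ha₂z : a₂ ≠ z := fun hh => hzf (hh ▸ ha₂f)
      have ha₁nm : a₁ ∉ insert a₂ Q := by
        simp only [mem_insert, not_or]
        exact ⟨ha12, ha₁Q⟩
      have hc12 : (insert a₁ (insert a₂ Q)).card = ℓ - 1 := by
        rw [card_insert_of_notMem ha₁nm, card_insert_of_notMem ha₂Q]
        omega
      have hfeq : f = insert β (insert a₁ (insert a₂ Q)) := by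
        have hsub : insert β (insert a₁ (insert a₂ Q)) ⊆ f := by
          intro x hx
          rcases mem_insert.1 hx with rfl | hx
          · exact hβf
          rcases mem_insert.1 hx with rfl | hx
          · exact ha₁f
          rcases mem_insert.1 hx with rfl | hx
          · exact ha₂f
          · exact hQf hx
        have hβnm : β ∉ insert a₁ (insert a₂ Q) := by
          simp only [mem_insert, not_or]
          exact ⟨ha₁β.symm, ha₂β.symm, hβQ⟩
        have hcardeq : (insert β (insert a₁ (insert a₂ Q))).card = ℓ := by
          rw [card_insert_of_notMem hβnm]
          omega
        exact (eq_of_subset_of_card_le hsub (by omega)).symm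
      have hP₁c : (insert a₁ Q).card = ℓ - 2 := by
        rw [card_insert_of_notMem ha₁Q]; omega
      have hP₂c : (insert a₂ Q).card = ℓ - 2 := by
        rw [card_insert_of_notMem ha₂Q]; omega
      obtain ⟨h₁, hh₁C, hP₁h₁⟩ := hcov (insert a₁ Q) (insert_subset ha₁e hQe) hP₁c
      obtain ⟨h₂, hh₂C, hP₂h₂⟩ := hcov (insert a₂ Q) (insert_subset ha₂e hQe) hP₂c
      obtain ⟨k₁, hk₁Λ, k₂, hk₂Λ, hP₁k₁, hP₂k₂, hkk⟩ :=
        hIN h₁ h₂ Q a₁ a₂ ((hh₁C.symm').trans' hh₂C) hQc ha₁Q ha₂Q ha12 hP₁h₁ hP₂h₂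
      have hk₁C : Conn (ℓ-2) (linkEdges E z) h₀ k₁ := by
        refine hh₁C.tail' hk₁Λ ?_
        have := card_le_card (subset_inter hP₁h₁ hP₁k₁)
        omega
      have hk₂C : Conn (ℓ-2) (linkEdges E z) h₀ k₂ := by
        refine hh₂C.tail' hk₂Λ ?_
        have := card_le_card (subset_inter hP₂h₂ hP₂k₂)
        omega
      have hzk₁ : z ∉ k₁ := (mem_link.1 hk₁Λ).1
      have hzk₂ : z ∉ k₂ := (mem_link.1 hk₂Λ).1
      have hQk₁ : Q ⊆ k₁ := (subset_insert _ _).trans hP₁k₁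
      have hQk₂ : Q ⊆ k₂ := (subset_insert _ _).trans hP₂k₂
      have ha₁k₁ : a₁ ∈ k₁ := hP₁k₁ (mem_insert_self _ _)
      have ha₂k₂ : a₂ ∈ k₂ := hP₂k₂ (mem_insert_self _ _)
      have hk₁card : k₁.card = ℓ - 1 := link_unif hunif hk₁Λ
      have suba : ∀ k, k ∈ linkEdges E z → Conn (ℓ-2) (linkEdges E z) h₀ k →
          insert a₁ Q ⊆ k → insert a₂ Q ⊆ k →
          ∃ h, Conn (ℓ-2) (linkEdges E z) h₀ h ∧ P ⊆ h := by
        intro k hkΛ hkC h1k h2k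
        have hzk : z ∉ k := (mem_link.1 hkΛ).1
        have hκE : insert z k ∈ E := (mem_link.1 hkΛ).2
        have hQk : Q ⊆ k := (subset_insert _ _).trans h1k
        have hfκ : ℓ - 1 ≤ (f ∩ insert z k).card := by
          have hsub : insert a₁ (insert a₂ Q) ⊆ f ∩ insert z k := by
            intro x hx
            rcases mem_insert.1 hx with rfl | hx
            · exact mem_inter.2 ⟨ha₁f, mem_insert_of_mem (h1k (mem_insert_self _ _))⟩
            rcases mem_insert.1 hx with rfl | hx
            · exact mem_inter.2 ⟨ha₂f, mem_insert_of_mem (h2k (mem_insert_self _ _))⟩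
            · exact mem_inter.2 ⟨hQf hx, mem_insert_of_mem (hQk hx)⟩
          have := card_le_card hsub
          omega
        have hfκne : f ≠ insert z k := by
          intro hh
          exact hzf (hh ▸ mem_insert_self z k)
        have hout : ∃ a a', ((a = a₁ ∧ a' = a₂) ∨ (a = a₂ ∧ a' = a₁)) ∧
            (f ∪ insert z k).erase a ∈ E := by
          rcases key2 hℓ hunif hdisp hf hκE hfκne hfκ
            (mem_union_left _ ha₁f) (mem_union_left _ ha₂f) ha12 with hm | hm
          · exact ⟨a₁, a₂, Or.inl ⟨rfl, rfl⟩, hm⟩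
          · exact ⟨a₂, a₁, Or.inr ⟨rfl, rfl⟩, hm⟩
        obtain ⟨a, a', haa', hmE⟩ := hout
        have hane : a ≠ a' := by
          rcases haa' with ⟨rfl, rfl⟩ | ⟨rfl, rfl⟩
          · exact ha12
          · exact ha12.symm
        have haf : a ∈ f := by
          rcases haa' with ⟨rfl, rfl⟩ | ⟨rfl, rfl⟩
          · exact ha₁f
          · exact ha₂f
        have haz : a ≠ z := by
          rcases haa' with ⟨rfl, rfl⟩ | ⟨rfl, rfl⟩
          · exact ha₁z
          · exact ha₂z
        have haβ : a ≠ β := by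
          rcases haa' with ⟨rfl, rfl⟩ | ⟨rfl, rfl⟩
          · exact ha₁β
          · exact ha₂β
        have haQ : a ∉ Q := by
          rcases haa' with ⟨rfl, rfl⟩ | ⟨rfl, rfl⟩
          · exact ha₁Q
          · exact ha₂Q
        have ha'k : a' ∈ k := by
          rcases haa' with ⟨rfl, rfl⟩ | ⟨rfl, rfl⟩
          · exact h2k (mem_insert_self _ _)
          · exact h1k (mem_insert_self _ _)
        have ha'Q : a' ∉ Q := by
          rcases haa' with ⟨rfl, rfl⟩ | ⟨rfl, rfl⟩
          · exact ha₂Q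
          · exact ha₁Q
        have ha'z : a' ≠ z := fun hh => hzk (hh ▸ ha'k)
        have hzm : z ∈ (f ∪ insert z k).erase a :=
          mem_erase.2 ⟨fun hh => haz hh.symm,
            mem_union_right _ (mem_insert_self _ _)⟩
        have hmΛ : ((f ∪ insert z k).erase a).erase z ∈ linkEdges E z :=
          mem_link.2 ⟨notMem_erase _ _, by rwa [insert_erase hzm]⟩
        refine ⟨((f ∪ insert z k).erase a).erase z, hkC.tail' hmΛ ?_, ?_⟩
        · have hsub2 : insert a' Q ⊆ k ∩ (((f ∪ insert z k).erase a).erase z) := by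
            intro x hx
            have hxk : x ∈ k := by
              rcases mem_insert.1 hx with rfl | hx
              · exact ha'k
              · exact hQk hx
            have hxz : x ≠ z := fun hh => hzk (hh ▸ hxk)
            have hxa : x ≠ a := by
              rcases mem_insert.1 hx with rfl | hx
              · exact hane.symm
              · exact fun hh => haQ (hh ▸ hx)
            refine mem_inter.2 ⟨hxk, mem_erase.2 ⟨hxz, mem_erase.2 ⟨hxa, ?_⟩⟩⟩
            exact mem_union_right _ (mem_insert_of_mem hxk)
          have hic : (insert a' Q).card = ℓ - 2 := by
            rw [card_insert_of_notMem ha'Q]; omega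
          have := card_le_card hsub2
          omega
        · intro x hx
          have hxf : x ∈ f := hPf hx
          have hxz : x ≠ z := fun hh => hzf (hh ▸ hxf)
          have hxa : x ≠ a := by
            rcases hPQβ x hx with rfl | hxQ
            · exact haβ.symm
            · exact fun hh => haQ (hh ▸ hxQ)
          exact mem_erase.2 ⟨hxz, mem_erase.2 ⟨hxa, mem_union_left _ hxf⟩⟩
      by_cases h21 : a₂ ∈ k₁
      · exact suba k₁ hk₁Λ hk₁C hP₁k₁ (insert_subset h21 hQk₁)
      by_cases h12 : a₁ ∈ k₂
      · exact suba k₂ hk₂Λ hk₂C (insert_subset h12 hQk₂) hP₂k₂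
      have hcex : ∃ c, c ∈ k₁ ∩ k₂ ∧ c ∉ Q := by
        by_contra hno
        push_neg at hno
        have hsub : k₁ ∩ k₂ ⊆ Q := fun x hx => hno x hx
        have := card_le_card hsub
        omega
      obtain ⟨c, hck, hcQ⟩ := hcex
      obtain ⟨hck₁, hck₂⟩ := mem_inter.1 hck
      have hcz : c ≠ z := fun hh => hzk₁ (hh ▸ hck₁)
      have hca₁ : c ≠ a₁ := fun hh => h12 (hh ▸ hck₂)
      have hca₂ : c ≠ a₂ := fun hh => h21 (hh ▸ hck₁)
      by_cases hcβ : c = β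
      · refine ⟨k₁, hk₁C, ?_⟩
        intro x hx
        rcases hPQβ x hx with rfl | hxQ
        · exact hcβ ▸ hck₁
        · exact hQk₁ hxQ
      have hκ₁E : insert z k₁ ∈ E := (mem_link.1 hk₁Λ).2
      have hκ₂E : insert z k₂ ∈ E := (mem_link.1 hk₂Λ).2
      have hκne : insert z k₁ ≠ insert z k₂ := by
        intro hh
        have hkk12 : k₁ = k₂ := by
          rw [← erase_insert hzk₁, ← erase_insert hzk₂, hh]
        exact h12 (hkk12 ▸ ha₁k₁)
      have hκcap : ℓ - 1 ≤ (insert z k₁ ∩ insert z k₂).card := by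
        have hsub : insert z (insert c Q) ⊆ insert z k₁ ∩ insert z k₂ := by
          intro x hx
          rcases mem_insert.1 hx with rfl | hx
          · exact mem_inter.2 ⟨mem_insert_self _ _, mem_insert_self _ _⟩
          rcases mem_insert.1 hx with rfl | hx
          · exact mem_inter.2 ⟨mem_insert_of_mem hck₁, mem_insert_of_mem hck₂⟩
          · exact mem_inter.2 ⟨mem_insert_of_mem (hQk₁ hx), mem_insert_of_mem (hQk₂ hx)⟩
        have hznm : z ∉ insert c Q := by
          simp only [mem_insert, not_or]
          exact ⟨fun hh => hcz hh.symm, hzQ⟩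
        have hic : (insert z (insert c Q)).card = ℓ - 1 := by
          rw [card_insert_of_notMem hznm, card_insert_of_notMem hcQ]
          omega
        have := card_le_card hsub
        omega
      rcases key2 hℓ hunif hdisp hκ₁E hκ₂E hκne hκcap
        (mem_union_left _ (mem_insert_of_mem hck₁))
        (mem_union_left _ (mem_insert_self _ _)) hcz with hn₀ | ht₀
      · -- Q ∪ {a₁, a₂} ∪ {z} is an edge: reduce to suba
        have hzn : z ∈ ((insert z k₁ ∪ insert z k₂).erase c) :=
          mem_erase.2 ⟨fun hh => hcz hh.symm, mem_union_left _ (mem_insert_self _ _)⟩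
        have hknew : (((insert z k₁ ∪ insert z k₂).erase c).erase z) ∈ linkEdges E z :=
          mem_link.2 ⟨notMem_erase _ _, by rwa [insert_erase hzn]⟩
        have hsubnew : ∀ x, (x ∈ k₁ ∨ x ∈ k₂) → x ≠ c →
            x ∈ ((insert z k₁ ∪ insert z k₂).erase c).erase z := by
          intro x hx hxc
          have hxz : x ≠ z := by
            rcases hx with h | h
            · exact fun hh => hzk₁ (hh ▸ h)
            · exact fun hh => hzk₂ (hh ▸ h)
          refine mem_erase.2 ⟨hxz, mem_erase.2 ⟨hxc, ?_⟩⟩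
          rcases hx with h | h
          · exact mem_union_left _ (mem_insert_of_mem h)
          · exact mem_union_right _ (mem_insert_of_mem h)
        have h1new : insert a₁ Q ⊆ ((insert z k₁ ∪ insert z k₂).erase c).erase z := by
          intro x hx
          rcases mem_insert.1 hx with rfl | hx
          · exact hsubnew _ (Or.inl ha₁k₁) hca₁.symm
          · exact hsubnew _ (Or.inl (hQk₁ hx)) (fun hh => hcQ (hh ▸ hx))
        have h2new : insert a₂ Q ⊆ ((insert z k₁ ∪ insert z k₂).erase c).erase z := by
          intro x hx
          rcases mem_insert.1 hx with rfl | hx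
          · exact hsubnew _ (Or.inr ha₂k₂) hca₂.symm
          · exact hsubnew _ (Or.inl (hQk₁ hx)) (fun hh => hcQ (hh ▸ hx))
        have hknewC : Conn (ℓ-2) (linkEdges E z) h₀
            (((insert z k₁ ∪ insert z k₂).erase c).erase z) := by
          refine hk₁C.tail' hknew ?_
          have hsub3 : insert a₁ Q ⊆
              k₁ ∩ (((insert z k₁ ∪ insert z k₂).erase c).erase z) :=
            subset_inter hP₁k₁ h1new
          have := card_le_card hsub3
          omega
        exact suba _ hknew hknewC h1new h2new
      · -- t₀ = Q ∪ {a₁,a₂,c} is an edge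
        have hzt₀ : z ∉ (insert z k₁ ∪ insert z k₂).erase z := notMem_erase _ _
        have hmemt₀ : ∀ x, (x ∈ k₁ ∨ x ∈ k₂) →
            x ∈ (insert z k₁ ∪ insert z k₂).erase z := by
          intro x hx
          have hxz : x ≠ z := by
            rcases hx with h | h
            · exact fun hh => hzk₁ (hh ▸ h)
            · exact fun hh => hzk₂ (hh ▸ h)
          refine mem_erase.2 ⟨hxz, ?_⟩
          rcases hx with h | h
          · exact mem_union_left _ (mem_insert_of_mem h)
          · exact mem_union_right _ (mem_insert_of_mem h)
        have htfcap : ℓ - 1 ≤ (((insert z k₁ ∪ insert z k₂).erase z) ∩ f).card := by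
          have hsub : insert a₁ (insert a₂ Q) ⊆
              ((insert z k₁ ∪ insert z k₂).erase z) ∩ f := by
            intro x hx
            rcases mem_insert.1 hx with rfl | hx
            · exact mem_inter.2 ⟨hmemt₀ _ (Or.inl ha₁k₁), ha₁f⟩
            rcases mem_insert.1 hx with rfl | hx
            · exact mem_inter.2 ⟨hmemt₀ _ (Or.inr ha₂k₂), ha₂f⟩
            · exact mem_inter.2 ⟨hmemt₀ _ (Or.inl (hQk₁ hx)), hQf hx⟩
          have := card_le_card hsub
          omega
        have htfne : (insert z k₁ ∪ insert z k₂).erase z ≠ f := by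
          intro hh
          have hcf : c ∈ f := hh ▸ (hmemt₀ c (Or.inl hck₁))
          rw [hfeq] at hcf
          simp only [mem_insert] at hcf
          rcases hcf with h | h | h | h
          · exact hcβ h
          · exact hca₁ h
          · exact hca₂ h
          · exact hcQ h
        have final : ∀ aD aK kk, aD ≠ aK → aD ∈ f → aD ∉ Q → aD ≠ β →
            aK ∈ f → aK ∉ Q → aK ≠ β → c ≠ aD → c ≠ aK →
            kk ∈ linkEdges E z → Conn (ℓ-2) (linkEdges E z) h₀ kk →
            insert aK Q ⊆ kk → c ∈ kk →
            (((insert z k₁ ∪ insert z k₂).erase z) ∪ f).erase aD ∈ E →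
            ∃ h, Conn (ℓ-2) (linkEdges E z) h₀ h ∧ P ⊆ h := by
          intro aD aK kk hDK hDf hDQ hDβ hKf hKQ hKβ hcD hcK hkkΛ hkkC hKkk hckk huE
          have hzkk : z ∉ kk := (mem_link.1 hkkΛ).1
          have hκE : insert z kk ∈ E := (mem_link.1 hkkΛ).2
          have hQkk : Q ⊆ kk := (subset_insert _ _).trans hKkk
          have haKkk : aK ∈ kk := hKkk (mem_insert_self _ _)
          have haKz : aK ≠ z := fun hh => hzkk (hh ▸ haKkk)
          have haDz : aD ≠ z := fun hh => hzf (hh ▸ hDf)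
          have hct₀ : c ∈ (insert z k₁ ∪ insert z k₂).erase z :=
            hmemt₀ c (Or.inl hck₁)
          have hcup : ℓ - 1 ≤
              (((((insert z k₁ ∪ insert z k₂).erase z) ∪ f).erase aD) ∩ insert z kk).card := by
            have hsub : insert aK (insert c Q) ⊆
                ((((insert z k₁ ∪ insert z k₂).erase z) ∪ f).erase aD) ∩ insert z kk := by
              intro x hx
              rcases mem_insert.1 hx with rfl | hx
              · exact mem_inter.2 ⟨mem_erase.2 ⟨hDK.symm, mem_union_right _ hKf⟩,
                  mem_insert_of_mem haKkk⟩
              rcases mem_insert.1 hx with rfl | hx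
              · exact mem_inter.2 ⟨mem_erase.2 ⟨fun hh => hcD hh, mem_union_left _ hct₀⟩,
                  mem_insert_of_mem hckk⟩
              · exact mem_inter.2 ⟨mem_erase.2 ⟨fun hh => hDQ (hh ▸ hx),
                  mem_union_right _ (hQf hx)⟩, mem_insert_of_mem (hQkk hx)⟩
            have haKnm : aK ∉ insert c Q := by
              simp only [mem_insert, not_or]
              exact ⟨fun hh => hcK hh.symm, hKQ⟩
            have hic : (insert aK (insert c Q)).card = ℓ - 1 := by
              rw [card_insert_of_notMem haKnm, card_insert_of_notMem hcQ]
              omega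
            have := card_le_card hsub
            omega
          have hune : ((((insert z k₁ ∪ insert z k₂).erase z) ∪ f).erase aD) ≠ insert z kk := by
            intro hh
            have hz2 : z ∈ (((insert z k₁ ∪ insert z k₂).erase z) ∪ f).erase aD :=
              hh ▸ mem_insert_self _ _
            have := (mem_erase.1 hz2).2
            rcases mem_union.1 this with h | h
            · exact hzt₀ h
            · exact hzf h
          have fin2 : ∀ d d', ((d = c ∧ d' = aK) ∨ (d = aK ∧ d' = c)) →
              ((((((insert z k₁ ∪ insert z k₂).erase z) ∪ f).erase aD) ∪ insert z kk).erase d ∈ E) →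
              ∃ h, Conn (ℓ-2) (linkEdges E z) h₀ h ∧ P ⊆ h := by
            intro d d' hdd' hwE
            have hdkk : d ∈ kk := by
              rcases hdd' with ⟨rfl, _⟩ | ⟨rfl, _⟩
              · exact hckk
              · exact haKkk
            have hd'kk : d' ∈ kk := by
              rcases hdd' with ⟨_, rfl⟩ | ⟨_, rfl⟩
              · exact haKkk
              · exact hckk
            have hdz : d ≠ z := fun hh => hzkk (hh ▸ hdkk)
            have hd'z : d' ≠ z := fun hh => hzkk (hh ▸ hd'kk)
            have hdd : d' ≠ d := by
              rcases hdd' with ⟨rfl, rfl⟩ | ⟨rfl, rfl⟩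
              · exact fun hh => hcK hh.symm
              · exact fun hh => hcK hh
            have hdQ : d ∉ Q := by
              rcases hdd' with ⟨rfl, _⟩ | ⟨rfl, _⟩
              · exact hcQ
              · exact hKQ
            have hd'Q : d' ∉ Q := by
              rcases hdd' with ⟨_, rfl⟩ | ⟨_, rfl⟩
              · exact hKQ
              · exact hcQ
            have hdβ : d ≠ β := by
              rcases hdd' with ⟨rfl, _⟩ | ⟨rfl, _⟩
              · exact hcβ
              · exact hKβ
            have hzw : z ∈ ((((((insert z k₁ ∪ insert z k₂).erase z) ∪ f).erase aD) ∪
                insert z kk).erase d) :=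
              mem_erase.2 ⟨fun hh => hdz hh.symm,
                mem_union_right _ (mem_insert_self _ _)⟩
            have hwΛ : (((((((insert z k₁ ∪ insert z k₂).erase z) ∪ f).erase aD) ∪
                insert z kk).erase d).erase z) ∈ linkEdges E z :=
              mem_link.2 ⟨notMem_erase _ _, by rwa [insert_erase hzw]⟩
            have hmemw : ∀ x, x ∈ kk → x ≠ d →
                x ∈ ((((((insert z k₁ ∪ insert z k₂).erase z) ∪ f).erase aD) ∪
                  insert z kk).erase d).erase z := by
              intro x hxkk hxd
              have hxz : x ≠ z := fun hh => hzkk (hh ▸ hxkk)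
              exact mem_erase.2 ⟨hxz, mem_erase.2 ⟨hxd,
                mem_union_right _ (mem_insert_of_mem hxkk)⟩⟩
            refine ⟨_, hkkC.tail' hwΛ ?_, ?_⟩
            · have hsub4 : insert d' Q ⊆ kk ∩
                  ((((((insert z k₁ ∪ insert z k₂).erase z) ∪ f).erase aD) ∪
                    insert z kk).erase d).erase z := by
                intro x hx
                rcases mem_insert.1 hx with rfl | hx
                · exact mem_inter.2 ⟨hd'kk, hmemw _ hd'kk hdd⟩
                · exact mem_inter.2 ⟨hQkk hx, hmemw _ (hQkk hx)
                    (fun hh => hdQ (hh ▸ hx))⟩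
              have hic : (insert d' Q).card = ℓ - 2 := by
                rw [card_insert_of_notMem hd'Q]; omega
              have := card_le_card hsub4
              omega
            · intro x hx
              rcases hPQβ x hx with rfl | hxQ
              · refine mem_erase.2 ⟨hβz, mem_erase.2 ⟨fun hh => hdβ hh.symm, ?_⟩⟩
                refine mem_union_left _ (mem_erase.2 ⟨fun hh => hDβ hh.symm, ?_⟩)
                exact mem_union_right _ hβf
              · exact hmemw _ (hQkk hxQ) (fun hh => hdQ (hh ▸ hxQ))
          rcases key2 hℓ hunif hdisp huE hκE hune hcup
            (mem_union_right _ (mem_insert_of_mem hckk))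
            (mem_union_right _ (mem_insert_of_mem haKkk)) hcK with hw | hw
          · exact fin2 c aK (Or.inl ⟨rfl, rfl⟩) hw
          · exact fin2 aK c (Or.inr ⟨rfl, rfl⟩) hw
        rcases key2 hℓ hunif hdisp ht₀ hf htfne htfcap
          (mem_union_right _ ha₁f) (mem_union_right _ ha₂f) ha12 with h | h
        · exact final a₁ a₂ k₂ ha12 ha₁f ha₁Q ha₁β ha₂f ha₂Q ha₂β hca₁ hca₂
            hk₂Λ hk₂C hP₂k₂ hck₂ h
        · exact final a₂ a₁ k₁ ha12.symm ha₂f ha₂Q ha₂β ha₁f ha₁Q ha₁β hca₂ hca₁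
            hk₁Λ hk₁C hP₁k₁ hck₁ h


/-- Turn an abstract `Conn` into a concrete tight walk in the link. -/
lemma conn_walk {m : ℕ} {Λ : Finset (Finset V)} {a b : Finset V}
    (h : Conn m Λ a b) :
    ∃ es : List (Finset V), ∃ hne : es ≠ [],
      (∀ e ∈ es, e ∈ Λ) ∧ es.Chain' (fun u v => m ≤ (u ∩ v).card) ∧
      es.head hne = a ∧ es.getLast hne = b := by
  obtain ⟨haΛ, hr⟩ := h
  induction hr using Relation.ReflTransGen.head_induction_on with
  | refl =>
      exact ⟨[b], by simp, by simpa using haΛ, List.isChain_singleton _, rfl, rfl⟩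
  | head hadj hr ih =>
      rename_i x c
      obtain ⟨es, hne, hmem, hch, hhead, hlast⟩ := ih hadj.1
      cases es with
      | nil => exact absurd rfl hne
      | cons w ws =>
          refine ⟨x :: w :: ws, by simp, ?_, ?_, rfl, ?_⟩
          · intro e he
            rcases List.mem_cons.1 he with rfl | he
            · exact haΛ
            · exact hmem _ he
          · refine List.isChain_cons_cons.2 ⟨?_, hch⟩
            have : w = c := hhead
            rw [this]
            exact hadj.2
          · rw [List.getLast_cons (by simp : w :: ws ≠ [])]
            exact hlast

/-- Propagate the invariant along a tight walk. -/
lemma walk_inv {ℓ : ℕ} (hℓ : 3 ≤ ℓ) {E : Finset (Finset V)}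
    (hunif : ∀ e ∈ E, e.card = ℓ) (hdisp : Disperse ℓ E) (z : V)
    (hIN : InnerProp ℓ E z) (h₀ : Finset V) :
    ∀ es : List (Finset V), ∀ hne : es ≠ [], (∀ e ∈ es, e ∈ E) →
      es.Chain' (fun a b => ℓ - 1 ≤ (a ∩ b).card) →
      Inv ℓ E z h₀ (es.head hne) → Inv ℓ E z h₀ (es.getLast hne) := by
  intro es
  induction es with
  | nil => intro hne; exact absurd rfl hne
  | cons e rest ih =>
      intro hne hmem hch hinv
      cases rest with
      | nil => simpa using hinv
      | cons e₂ rest₂ =>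
          have hch' := List.isChain_cons_cons.1 hch
          have hinv₂ : Inv ℓ E z h₀ e₂ :=
            prop_step hℓ hunif hdisp z hIN h₀
              (hmem e List.mem_cons_self)
              (hmem e₂ (List.mem_cons.2 (Or.inr List.mem_cons_self)))
              hch'.1 (by simpa using hinv)
          have := ih (by simp) (fun x hx => hmem x (List.mem_cons.2 (Or.inr hx)))
            hch'.2 (by simpa using hinv₂)
          rw [List.getLast_cons (by simp)]
          exact this

/-- The main statement, as a predicate in `ℓ`. -/
def MainStmt (V : Type*) [DecidableEq V] (ℓ : ℕ) : Prop :=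
  ∀ E : Finset (Finset V), (∀ e ∈ E, e.card = ℓ) → Disperse ℓ E →
    ∀ A₁ A₂ : Finset V, A₁.card = ℓ - 1 → A₂.card = ℓ - 1 →
      (A₁ ∩ A₂).card = ℓ - 2 → TightConn ℓ E A₁ A₂ →
      ∃ e₁ ∈ E, ∃ e₂ ∈ E, ℓ - 1 ≤ (e₁ ∩ e₂).card ∧ A₁ ⊆ e₁ ∧ A₂ ⊆ e₂

/-- Main argument, given the inner statement for every vertex. -/
lemma main_aux {ℓ : ℕ} (hℓ : 3 ≤ ℓ) {E : Finset (Finset V)}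
    (hunif : ∀ e ∈ E, e.card = ℓ) (hdisp : Disperse ℓ E)
    (hIN : ∀ z : V, InnerProp ℓ E z)
    {A₁ A₂ : Finset V} (h₁ : A₁.card = ℓ - 1) (h₂ : A₂.card = ℓ - 1)
    (hint : (A₁ ∩ A₂).card = ℓ - 2) (hconn : TightConn ℓ E A₁ A₂) :
    ∃ e₁ ∈ E, ∃ e₂ ∈ E, ℓ - 1 ≤ (e₁ ∩ e₂).card ∧ A₁ ⊆ e₁ ∧ A₂ ⊆ e₂ := by
  obtain ⟨es, hne, hmem, hch, hA₁, hA₂⟩ := hconn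
  -- choose the common vertex z and the two private vertices x y
  have hzex : (A₁ ∩ A₂).Nonempty := by
    rw [← card_pos, hint]; omega
  obtain ⟨z, hz⟩ := hzex
  obtain ⟨hzA₁, hzA₂⟩ := mem_inter.1 hz
  have hx1 : (A₁ \ A₂).card = 1 := by
    have := card_sdiff_add_card_inter A₁ A₂
    omega
  have hy1 : (A₂ \ A₁).card = 1 := by
    have := card_sdiff_add_card_inter A₂ A₁
    rw [inter_comm] at hint
    omega
  obtain ⟨x, hxeq⟩ := card_eq_one.1 hx1
  obtain ⟨y, hyeq⟩ := card_eq_one.1 hy1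
  have hxmem : x ∈ A₁ \ A₂ := hxeq ▸ mem_singleton_self x
  have hymem : y ∈ A₂ \ A₁ := hyeq ▸ mem_singleton_self y
  obtain ⟨hxA₁, hxA₂⟩ := mem_sdiff.1 hxmem
  obtain ⟨hyA₂, hyA₁⟩ := mem_sdiff.1 hymem
  have hxy : x ≠ y := fun hh => hxA₂ (hh ▸ hyA₂)
  have hxz : x ≠ z := fun hh => hxA₂ (hh ▸ hzA₂)
  have hyz : y ≠ z := fun hh => hyA₁ (hh ▸ hzA₁)
  set Q := (A₁ ∩ A₂).erase z with hQdef
  have hQc : Q.card = ℓ - 3 := by rw [hQdef, card_erase_of_mem hz]; omega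
  have hxQ : x ∉ Q := fun hh => hxA₂ (mem_inter.1 (erase_subset _ _ hh)).2
  have hyQ : y ∉ Q := fun hh => hyA₁ (mem_inter.1 (erase_subset _ _ hh)).1
  -- decompositions of A₁, A₂
  have hA₁dec : ∀ t ∈ A₁, t = z ∨ t = x ∨ t ∈ Q := by
    intro t ht
    rcases eq_or_ne t z with rfl | htz
    · exact Or.inl rfl
    by_cases htA₂ : t ∈ A₂
    · exact Or.inr (Or.inr (mem_erase.2 ⟨htz, mem_inter.2 ⟨ht, htA₂⟩⟩))
    · have : t ∈ A₁ \ A₂ := mem_sdiff.2 ⟨ht, htA₂⟩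
      rw [hxeq, mem_singleton] at this
      exact Or.inr (Or.inl this)
  have hA₂dec : ∀ t ∈ A₂, t = z ∨ t = y ∨ t ∈ Q := by
    intro t ht
    rcases eq_or_ne t z with rfl | htz
    · exact Or.inl rfl
    by_cases htA₁ : t ∈ A₁
    · exact Or.inr (Or.inr (mem_erase.2 ⟨htz, mem_inter.2 ⟨htA₁, ht⟩⟩))
    · have : t ∈ A₂ \ A₁ := mem_sdiff.2 ⟨ht, htA₁⟩
      rw [hyeq, mem_singleton] at this
      exact Or.inr (Or.inl this)
  -- set up the invariant
  have hzhead : z ∈ es.head hne := hA₁ hzA₁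
  have hzlast : z ∈ es.getLast hne := hA₂ hzA₂
  have hheadE : es.head hne ∈ E := hmem _ (List.head_mem hne)
  have hlastE : es.getLast hne ∈ E := hmem _ (List.getLast_mem hne)
  have hh₀Λ : (es.head hne).erase z ∈ linkEdges E z :=
    mem_link.2 ⟨notMem_erase _ _, by rwa [insert_erase hzhead]⟩
  have hinv0 : Inv ℓ E z ((es.head hne).erase z) (es.head hne) :=
    Or.inl ⟨hzhead, conn_refl hh₀Λ⟩
  have hinvlast := walk_inv hℓ hunif hdisp z (hIN z) _ es hne hmem hch hinv0
  have hconnlast : Conn (ℓ-2) (linkEdges E z) ((es.head hne).erase z)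
      ((es.getLast hne).erase z) := by
    rcases hinvlast with ⟨_, hc⟩ | ⟨hzl, _⟩
    · exact hc
    · exact absurd hzlast hzl
  -- apply the inner statement
  have hsub1 : insert x Q ⊆ (es.head hne).erase z := by
    intro t ht
    rcases mem_insert.1 ht with rfl | ht
    · exact mem_erase.2 ⟨hxz, hA₁ hxA₁⟩
    · have htA₁ : t ∈ A₁ := (mem_inter.1 (erase_subset _ _ ht)).1
      exact mem_erase.2 ⟨(mem_erase.1 ht).1, hA₁ htA₁⟩
  have hsub2 : insert y Q ⊆ (es.getLast hne).erase z := by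
    intro t ht
    rcases mem_insert.1 ht with rfl | ht
    · exact mem_erase.2 ⟨hyz, hA₂ hyA₂⟩
    · have htA₂ : t ∈ A₂ := (mem_inter.1 (erase_subset _ _ ht)).2
      exact mem_erase.2 ⟨(mem_erase.1 ht).1, hA₂ htA₂⟩
  obtain ⟨k₁, hk₁Λ, k₂, hk₂Λ, hxk₁, hyk₂, hkk⟩ :=
    hIN z _ _ Q x y hconnlast hQc hxQ hyQ hxy hsub1 hsub2
  have hzk₁ : z ∉ k₁ := (mem_link.1 hk₁Λ).1
  have hzk₂ : z ∉ k₂ := (mem_link.1 hk₂Λ).1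
  refine ⟨insert z k₁, (mem_link.1 hk₁Λ).2, insert z k₂, (mem_link.1 hk₂Λ).2, ?_, ?_, ?_⟩
  · have hsub : insert z (k₁ ∩ k₂) ⊆ insert z k₁ ∩ insert z k₂ := by
      intro t ht
      rcases mem_insert.1 ht with rfl | ht
      · exact mem_inter.2 ⟨mem_insert_self _ _, mem_insert_self _ _⟩
      · exact mem_inter.2 ⟨mem_insert_of_mem (mem_inter.1 ht).1,
          mem_insert_of_mem (mem_inter.1 ht).2⟩
    have hic : (insert z (k₁ ∩ k₂)).card = (k₁ ∩ k₂).card + 1 :=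
      card_insert_of_notMem (fun hh => hzk₁ (mem_inter.1 hh).1)
    have := card_le_card hsub
    omega
  · intro t ht
    rcases hA₁dec t ht with rfl | rfl | htQ
    · exact mem_insert_self _ _
    · exact mem_insert_of_mem (hxk₁ (mem_insert_self _ _))
    · exact mem_insert_of_mem (hxk₁ (mem_insert_of_mem htQ))
  · intro t ht
    rcases hA₂dec t ht with rfl | rfl | htQ
    · exact mem_insert_self _ _
    · exact mem_insert_of_mem (hyk₂ (mem_insert_self _ _))
    · exact mem_insert_of_mem (hyk₂ (mem_insert_of_mem htQ))

/-- The inner statement at level `ℓ+1` from the main statement at level `ℓ`. -/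
lemma inner_of_ih {ℓ : ℕ} (hℓ : 3 ≤ ℓ) (IH : MainStmt V ℓ)
    {E : Finset (Finset V)} (hunif : ∀ e ∈ E, e.card = ℓ + 1)
    (hdisp : Disperse (ℓ + 1) E) (z : V) : InnerProp (ℓ + 1) E z := by
  intro h₁ h₂ Q a₁ a₂ hConn hQc ha₁Q ha₂Q ha12 h1sub h2sub
  have hlink_unif : ∀ e ∈ linkEdges E z, e.card = ℓ := by
    intro e he
    have := link_unif hunif he
    omega
  have hlink_disp : Disperse ℓ (linkEdges E z) := by
    have := link_disperse (by omega) hunif hdisp z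
    simpa using this
  obtain ⟨es, hne, hmem, hch, hhead, hlast⟩ := conn_walk hConn
  have htc : TightConn ℓ (linkEdges E z) (insert a₁ Q) (insert a₂ Q) := by
    refine ⟨es, hne, hmem, ?_, ?_, ?_⟩
    · have hpred : ℓ - 1 = ℓ + 1 - 2 := by omega
      rw [hpred]
      exact hch
    · rw [hhead]; exact h1sub
    · rw [hlast]; exact h2sub
  have hc₁ : (insert a₁ Q).card = ℓ - 1 := by
    rw [card_insert_of_notMem ha₁Q]; omega
  have hc₂ : (insert a₂ Q).card = ℓ - 1 := by
    rw [card_insert_of_notMem ha₂Q]; omega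
  have hQeq : insert a₁ Q ∩ insert a₂ Q = Q := by
    ext t
    simp only [mem_inter, mem_insert]
    constructor
    · rintro ⟨h1 | h1, h2 | h2⟩
      · exact absurd (h1 ▸ h2) ha12
      · exact absurd (h1 ▸ h2) ha₁Q
      · exact absurd (h2 ▸ h1) ha₂Q
      · exact h1
    · intro ht
      exact ⟨Or.inr ht, Or.inr ht⟩
  have hintc : (insert a₁ Q ∩ insert a₂ Q).card = ℓ - 2 := by
    rw [hQeq]; omega
  obtain ⟨e₁, he₁, e₂, he₂, hcap, hs₁, hs₂⟩ :=
    IH (linkEdges E z) hlink_unif hlink_disp _ _ hc₁ hc₂ hintc htc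
  refine ⟨e₁, he₁, e₂, he₂, hs₁, hs₂, by omega⟩

lemma inner3 {E : Finset (Finset V)} (hunif : ∀ e ∈ E, e.card = 3)
    (hdisp : Disperse 3 E) (z : V) : InnerProp 3 E z := by
  have hpair : ∀ (s t : V) (A B : Finset V), s ∈ A → s ∈ B → t ∈ A → t ∈ B →
      s ≠ t → 2 ≤ (A ∩ B).card := by
    intro s t A B hsA hsB htA htB hst
    have hsub : insert s {t} ⊆ A ∩ B :=
      insert_subset_iff.2 ⟨mem_inter.2 ⟨hsA, hsB⟩,
        singleton_subset_iff.2 (mem_inter.2 ⟨htA, htB⟩)⟩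
    have h2 := card_le_card hsub
    rwa [card_insert_of_notMem (by simpa using hst), card_singleton] at h2
  have hone : ∀ (s : V) (A B : Finset V), s ∈ A → s ∈ B → 1 ≤ (A ∩ B).card := by
    intro s A B hsA hsB
    exact card_pos.2 ⟨s, mem_inter.2 ⟨hsA, hsB⟩⟩
  intro h₁ h₂ Q a₁' a₂ hConn hQc ha₁Q ha₂Q ha12 h1sub h2sub
  have hQ : Q = ∅ := card_eq_zero.1 (by simpa using hQc)
  subst hQ
  have ha₁h₁ : a₁' ∈ h₁ := h1sub (mem_insert_self _ _)
  have ha₂h₂ : a₂ ∈ h₂ := h2sub (mem_insert_self _ _)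
  suffices hgoal : ∃ k₁ ∈ linkEdges E z, ∃ k₂ ∈ linkEdges E z,
      a₁' ∈ k₁ ∧ a₂ ∈ k₂ ∧ 1 ≤ (k₁ ∩ k₂).card by
    obtain ⟨k₁, hk₁, k₂, hk₂, hm1, hm2, hc⟩ := hgoal
    refine ⟨k₁, hk₁, k₂, hk₂, ?_, ?_, by simpa using hc⟩
    · intro t ht
      rcases mem_insert.1 ht with rfl | ht
      · exact hm1
      · exact absurd ht (notMem_empty t)
    · intro t ht
      rcases mem_insert.1 ht with rfl | ht
      · exact hm2
      · exact absurd ht (notMem_empty t)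
  clear h1sub h2sub hQc ha₁Q ha₂Q ha12
  obtain ⟨hh₁Λ, hr⟩ := hConn
  revert a₁'
  induction hr using Relation.ReflTransGen.head_induction_on with
  | refl =>
      intro a₁ ha₁
      exact ⟨h₂, hh₁Λ, h₂, hh₁Λ, ha₁, ha₂h₂, hone a₂ _ _ ha₂h₂ ha₂h₂⟩
  | head hadj hr ih =>
      rename_i x c
      intro a₁ ha₁x
      have hxΛ : x ∈ linkEdges E z := hh₁Λ
      have hcΛ : c ∈ linkEdges E z := hadj.1
      have hccomex : (x ∩ c).Nonempty := by
        rw [← card_pos]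
        have := hadj.2
        omega
      obtain ⟨ccom, hccom⟩ := hccomex
      obtain ⟨hcx, hcc⟩ := mem_inter.1 hccom
      obtain ⟨k₁', hk₁'Λ, k₂', hk₂'Λ, hck₁', ha₂k₂', hcap'⟩ := ih hcΛ ccom hcc
      by_cases ha₁c : a₁ = ccom
      · exact ⟨k₁', hk₁'Λ, k₂', hk₂'Λ, ha₁c ▸ hck₁', ha₂k₂', hcap'⟩
      have hxcard : x.card = 2 := by have := link_unif hunif hxΛ; omega
      have hxeq : x = insert a₁ {ccom} := by
        refine (eq_of_subset_of_card_le ?_ ?_).symm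
        · intro t ht
          rcases mem_insert.1 ht with rfl | ht
          · exact ha₁x
          · rw [mem_singleton] at ht; exact ht ▸ hcx
        · rw [card_insert_of_notMem (by simpa using ha₁c), card_singleton, hxcard]
      have hzx : z ∉ x := (mem_link.1 hxΛ).1
      have hza₁ : a₁ ≠ z := fun hh => hzx (hh ▸ ha₁x)
      have hzc : ccom ≠ z := fun hh => hzx (hh ▸ hcx)
      have hE₀ : insert z x ∈ E := (mem_link.1 hxΛ).2
      have hzk₁' : z ∉ k₁' := (mem_link.1 hk₁'Λ).1
      have hzk₂' : z ∉ k₂' := (mem_link.1 hk₂'Λ).1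
      have hza₂ : a₂ ≠ z := fun hh => hzk₂' (hh ▸ ha₂k₂')
      have huex : (k₁' ∩ k₂').Nonempty := by rw [← card_pos]; omega
      obtain ⟨u, hu⟩ := huex
      obtain ⟨huk₁', huk₂'⟩ := mem_inter.1 hu
      have hzu : u ≠ z := fun hh => hzk₁' (hh ▸ huk₁')
      by_cases huc : u = ccom
      · refine ⟨x, hxΛ, k₂', hk₂'Λ, ha₁x, ha₂k₂', hone ccom _ _ hcx (huc ▸ huk₂')⟩
      by_cases hua₁ : u = a₁
      · exact ⟨k₁', hk₁'Λ, k₂', hk₂'Λ, hua₁ ▸ huk₁', ha₂k₂',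
          hone u _ _ huk₁' huk₂'⟩
      by_cases ha₂c : a₂ = ccom
      · exact ⟨x, hxΛ, x, hxΛ, ha₁x, ha₂c ▸ hcx, hone a₁ _ _ ha₁x ha₁x⟩
      by_cases ha₂u : a₂ = u
      · exact ⟨x, hxΛ, k₁', hk₁'Λ, ha₁x, ha₂u ▸ huk₁', hone ccom _ _ hcx hck₁'⟩
      by_cases ha₁₂ : a₂ = a₁
      · exact ⟨x, hxΛ, x, hxΛ, ha₁x, ha₁₂ ▸ ha₁x, hone a₁ _ _ ha₁x ha₁x⟩
      -- now all of z, a₁, ccom, u, a₂ behave; k₁' = {ccom, u}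
      have hk₁'card : k₁'.card = 2 := by have := link_unif hunif hk₁'Λ; omega
      have hk₁'eq : k₁' = insert ccom {u} := by
        refine (eq_of_subset_of_card_le ?_ ?_).symm
        · intro t ht
          rcases mem_insert.1 ht with rfl | ht
          · exact hck₁'
          · rw [mem_singleton] at ht; exact ht ▸ huk₁'
        · rw [card_insert_of_notMem (by simpa using fun hh => huc hh.symm),
            card_singleton, hk₁'card]
      have hζ₁ : insert z k₁' ∈ E := (mem_link.1 hk₁'Λ).2
      have ha₁k₁' : a₁ ∉ k₁' := by
        rw [hk₁'eq]
        simp only [mem_insert, mem_singleton, not_or]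
        exact ⟨ha₁c, fun hh => hua₁ hh.symm⟩
      -- key2 #1 : on insert z x and insert z k₁'
      have hcap₁ : (3:ℕ) - 1 ≤ ((insert z x) ∩ (insert z k₁')).card := by
        have := hpair z ccom (insert z x) (insert z k₁') (mem_insert_self _ _)
          (mem_insert_self _ _) (mem_insert_of_mem hcx) (mem_insert_of_mem hck₁')
          (fun hh => hzc hh.symm)
        omega
      have hne₁ : insert z x ≠ insert z k₁' := by
        intro hh
        have : a₁ ∈ insert z k₁' := hh ▸ mem_insert_of_mem ha₁x
        rcases mem_insert.1 this with h | h
        · exact hza₁ h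
        · exact ha₁k₁' h
      rcases key2 (le_refl 3) hunif hdisp hE₀ hζ₁ hne₁ hcap₁
        (mem_union_left _ (mem_insert_of_mem hcx))
        (mem_union_left _ (mem_insert_self _ _)) hzc with hm | hm
      · -- {z, a₁, u} is an edge
        have hzmem : z ∈ ((insert z x ∪ insert z k₁').erase ccom) :=
          mem_erase.2 ⟨fun hh => hzc hh.symm, mem_union_left _ (mem_insert_self _ _)⟩
        have hkΛ : (((insert z x ∪ insert z k₁').erase ccom).erase z) ∈ linkEdges E z :=
          mem_link.2 ⟨notMem_erase _ _, by rwa [insert_erase hzmem]⟩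
        refine ⟨_, hkΛ, k₂', hk₂'Λ, ?_, ha₂k₂', hone u _ _ ?_ huk₂'⟩
        · exact mem_erase.2 ⟨hza₁, mem_erase.2 ⟨ha₁c,
            mem_union_left _ (mem_insert_of_mem ha₁x)⟩⟩
        · exact mem_erase.2 ⟨hzu, mem_erase.2 ⟨huc,
            mem_union_right _ (mem_insert_of_mem huk₁')⟩⟩
      · -- {a₁, ccom, u} is an edge (this is hm : erase z ∈ E)
        have hk₂'card : k₂'.card = 2 := by have := link_unif hunif hk₂'Λ; omega
        have hk₂'eq : k₂' = insert u {a₂} := by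
          refine (eq_of_subset_of_card_le ?_ ?_).symm
          · intro t ht
            rcases mem_insert.1 ht with rfl | ht
            · exact huk₂'
            · rw [mem_singleton] at ht; exact ht ▸ ha₂k₂'
          · rw [card_insert_of_notMem (by simpa using fun hh => ha₂u hh.symm),
              card_singleton, hk₂'card]
        have hζ₂ : insert z k₂' ∈ E := (mem_link.1 hk₂'Λ).2
        have hccomk₂' : ccom ∉ k₂' := by
          rw [hk₂'eq]
          simp only [mem_insert, mem_singleton, not_or]
          exact ⟨fun hh => huc hh.symm, fun hh => ha₂c hh.symm⟩
        have hcap₂ : (3:ℕ) - 1 ≤ ((insert z k₁') ∩ (insert z k₂')).card := by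
          have := hpair z u (insert z k₁') (insert z k₂') (mem_insert_self _ _)
            (mem_insert_self _ _) (mem_insert_of_mem huk₁') (mem_insert_of_mem huk₂')
            (fun hh => hzu hh.symm)
          omega
        have hne₂ : insert z k₁' ≠ insert z k₂' := by
          intro hh
          have : ccom ∈ insert z k₂' := hh ▸ mem_insert_of_mem hck₁'
          rcases mem_insert.1 this with h | h
          · exact hzc h
          · exact hccomk₂' h
        rcases key2 (le_refl 3) hunif hdisp hζ₁ hζ₂ hne₂ hcap₂
          (mem_union_left _ (mem_insert_of_mem huk₁'))
          (mem_union_left _ (mem_insert_self _ _)) hzu with hn | hn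
        · -- {z, ccom, a₂} is an edge
          have hzmem : z ∈ ((insert z k₁' ∪ insert z k₂').erase u) :=
            mem_erase.2 ⟨fun hh => hzu hh.symm, mem_union_left _ (mem_insert_self _ _)⟩
          have hkΛ : (((insert z k₁' ∪ insert z k₂').erase u).erase z) ∈ linkEdges E z :=
            mem_link.2 ⟨notMem_erase _ _, by rwa [insert_erase hzmem]⟩
          refine ⟨x, hxΛ, _, hkΛ, ha₁x, ?_, hone ccom _ _ hcx ?_⟩
          · exact mem_erase.2 ⟨hza₂, mem_erase.2 ⟨ha₂u,
              mem_union_right _ (mem_insert_of_mem ha₂k₂')⟩⟩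
          · exact mem_erase.2 ⟨hzc, mem_erase.2 ⟨fun hh => huc hh.symm,
              mem_union_left _ (mem_insert_of_mem hck₁')⟩⟩
        · -- {ccom, u, a₂} is an edge : hn
          -- now combine {a₁,ccom,u} (hm) with {ccom,u,a₂} (hn)
          have ha₁X : a₁ ∈ (insert z x ∪ insert z k₁').erase z :=
            mem_erase.2 ⟨hza₁, mem_union_left _ (mem_insert_of_mem ha₁x)⟩
          have hccomX : ccom ∈ (insert z x ∪ insert z k₁').erase z :=
            mem_erase.2 ⟨hzc, mem_union_left _ (mem_insert_of_mem hcx)⟩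
          have huX : u ∈ (insert z x ∪ insert z k₁').erase z :=
            mem_erase.2 ⟨hzu, mem_union_right _ (mem_insert_of_mem huk₁')⟩
          have hccomY : ccom ∈ (insert z k₁' ∪ insert z k₂').erase z :=
            mem_erase.2 ⟨hzc, mem_union_left _ (mem_insert_of_mem hck₁')⟩
          have huY : u ∈ (insert z k₁' ∪ insert z k₂').erase z :=
            mem_erase.2 ⟨hzu, mem_union_left _ (mem_insert_of_mem huk₁')⟩
          have ha₂Y : a₂ ∈ (insert z k₁' ∪ insert z k₂').erase z :=
            mem_erase.2 ⟨hza₂, mem_union_right _ (mem_insert_of_mem ha₂k₂')⟩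
          have ha₁Y : a₁ ∉ (insert z k₁' ∪ insert z k₂').erase z := by
            intro hh
            rcases mem_union.1 (mem_erase.1 hh).2 with h | h
            · rcases mem_insert.1 h with h' | h'
              · exact hza₁ h'
              · exact ha₁k₁' h'
            · rcases mem_insert.1 h with h' | h'
              · exact hza₁ h'
              · rw [hk₂'eq] at h'
                rcases mem_insert.1 h' with h'' | h''
                · exact hua₁ h''.symm
                · rw [mem_singleton] at h''
                  exact ha₁₂ h''.symm
          have hcap₃ : (3:ℕ) - 1 ≤ (((insert z x ∪ insert z k₁').erase z) ∩
              ((insert z k₁' ∪ insert z k₂').erase z)).card := by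
            have := hpair ccom u _ _ hccomX hccomY huX huY (fun hh => huc hh.symm)
            omega
          have hne₃ : ((insert z x ∪ insert z k₁').erase z) ≠
              ((insert z k₁' ∪ insert z k₂').erase z) := by
            intro hh
            exact ha₁Y (hh ▸ ha₁X)
          rcases key2 (le_refl 3) hunif hdisp hm hn hne₃ hcap₃
            (mem_union_left _ huX) (mem_union_left _ hccomX)
            (fun hh => huc hh) with hp | hp
          · -- {a₁, ccom, a₂} is an edge (erase u); combine with insert z x = {z,a₁,ccom}
            have ha₁Z : a₁ ∈ ((insert z x ∪ insert z k₁').erase z ∪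
                (insert z k₁' ∪ insert z k₂').erase z).erase u :=
              mem_erase.2 ⟨fun hh => hua₁ hh.symm, mem_union_left _ ha₁X⟩
            have hccomZ : ccom ∈ ((insert z x ∪ insert z k₁').erase z ∪
                (insert z k₁' ∪ insert z k₂').erase z).erase u :=
              mem_erase.2 ⟨fun hh => huc hh.symm, mem_union_left _ hccomX⟩
            have ha₂Z : a₂ ∈ ((insert z x ∪ insert z k₁').erase z ∪
                (insert z k₁' ∪ insert z k₂').erase z).erase u :=
              mem_erase.2 ⟨ha₂u, mem_union_right _ ha₂Y⟩
            have hzZ : z ∉ ((insert z x ∪ insert z k₁').erase z ∪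
                (insert z k₁' ∪ insert z k₂').erase z).erase u := by
              intro hh
              rcases mem_union.1 (mem_erase.1 hh).2 with h | h
              · exact (notMem_erase _ _) h
              · exact (notMem_erase _ _) h
            have hcap₄ : (3:ℕ) - 1 ≤ ((((insert z x ∪ insert z k₁').erase z ∪
                (insert z k₁' ∪ insert z k₂').erase z).erase u) ∩ insert z x).card := by
              have := hpair a₁ ccom _ _ ha₁Z
                (mem_insert_of_mem ha₁x : a₁ ∈ insert z x) hccomZ
                (mem_insert_of_mem hcx : ccom ∈ insert z x) ha₁c
              omega
            have hne₄ : (((insert z x ∪ insert z k₁').erase z ∪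
                (insert z k₁' ∪ insert z k₂').erase z).erase u) ≠ insert z x := by
              intro hh
              rw [hh] at hzZ
              exact hzZ (mem_insert_self z x)
            rcases key2 (le_refl 3) hunif hdisp hp hE₀ hne₄ hcap₄
              (mem_union_left _ hccomZ) (mem_union_left _ ha₁Z)
              (fun hh => ha₁c hh.symm) with hq | hq
            · -- {z, a₁, a₂} edge
              have hzmem : z ∈ ((((insert z x ∪ insert z k₁').erase z ∪
                  (insert z k₁' ∪ insert z k₂').erase z).erase u ∪ insert z x).erase ccom) :=
                mem_erase.2 ⟨fun hh => hzc hh.symm,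
                  mem_union_right _ (mem_insert_self _ _)⟩
              have hkΛ := mem_link.2 ⟨notMem_erase z _, by rwa [insert_erase hzmem]⟩
              refine ⟨_, hkΛ, _, hkΛ, ?_, ?_, hone a₁ _ _ ?_ ?_⟩ <;>
                [skip; skip; skip; skip] <;>
                first
                | exact mem_erase.2 ⟨hza₁, mem_erase.2 ⟨ha₁c, mem_union_left _
                    (mem_erase.2 ⟨fun hh => hua₁ hh.symm, mem_union_left _ ha₁X⟩)⟩⟩
                | exact mem_erase.2 ⟨hza₂, mem_erase.2 ⟨ha₂c, mem_union_left _
                    (mem_erase.2 ⟨ha₂u, mem_union_right _ ha₂Y⟩)⟩⟩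
            · -- {z, ccom, a₂} edge
              have hzmem : z ∈ ((((insert z x ∪ insert z k₁').erase z ∪
                  (insert z k₁' ∪ insert z k₂').erase z).erase u ∪ insert z x).erase a₁) :=
                mem_erase.2 ⟨fun hh => hza₁ hh.symm,
                  mem_union_right _ (mem_insert_self _ _)⟩
              have hkΛ := mem_link.2 ⟨notMem_erase z _, by rwa [insert_erase hzmem]⟩
              refine ⟨x, hxΛ, _, hkΛ, ha₁x, ?_, hone ccom _ _ hcx ?_⟩
              · exact mem_erase.2 ⟨hza₂, mem_erase.2 ⟨fun hh => ha₁₂ hh,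
                  mem_union_left _ (mem_erase.2 ⟨ha₂u, mem_union_right _ ha₂Y⟩)⟩⟩
              · exact mem_erase.2 ⟨hzc, mem_erase.2 ⟨fun hh => ha₁c hh.symm,
                  mem_union_right _ (mem_insert_of_mem hcx : ccom ∈ insert z x)⟩⟩
          · -- {a₁, u, a₂} is an edge (erase ccom); combine with insert z k₂' = {z,u,a₂}
            have ha₁Z' : a₁ ∈ ((insert z x ∪ insert z k₁').erase z ∪
                (insert z k₁' ∪ insert z k₂').erase z).erase ccom :=
              mem_erase.2 ⟨ha₁c, mem_union_left _ ha₁X⟩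
            have huZ' : u ∈ ((insert z x ∪ insert z k₁').erase z ∪
                (insert z k₁' ∪ insert z k₂').erase z).erase ccom :=
              mem_erase.2 ⟨huc, mem_union_left _ huX⟩
            have ha₂Z' : a₂ ∈ ((insert z x ∪ insert z k₁').erase z ∪
                (insert z k₁' ∪ insert z k₂').erase z).erase ccom :=
              mem_erase.2 ⟨ha₂c, mem_union_right _ ha₂Y⟩
            have hzZ' : z ∉ ((insert z x ∪ insert z k₁').erase z ∪
                (insert z k₁' ∪ insert z k₂').erase z).erase ccom := by
              intro hh
              rcases mem_union.1 (mem_erase.1 hh).2 with h | h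
              · exact (notMem_erase _ _) h
              · exact (notMem_erase _ _) h
            have hcap₅ : (3:ℕ) - 1 ≤ ((((insert z x ∪ insert z k₁').erase z ∪
                (insert z k₁' ∪ insert z k₂').erase z).erase ccom) ∩ insert z k₂').card := by
              have := hpair u a₂ _ _ huZ'
                (mem_insert_of_mem huk₂' : u ∈ insert z k₂') ha₂Z'
                (mem_insert_of_mem ha₂k₂' : a₂ ∈ insert z k₂') (fun hh => ha₂u hh.symm)
              omega
            have hne₅ : (((insert z x ∪ insert z k₁').erase z ∪
                (insert z k₁' ∪ insert z k₂').erase z).erase ccom) ≠ insert z k₂' := by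
              intro hh
              rw [hh] at hzZ'
              exact hzZ' (mem_insert_self z k₂')
            rcases key2 (le_refl 3) hunif hdisp hp hζ₂ hne₅ hcap₅
              (mem_union_left _ huZ') (mem_union_left _ ha₂Z')
              (fun hh => ha₂u hh.symm) with hq | hq
            · -- {z, a₁, a₂} edge
              have hzmem : z ∈ ((((insert z x ∪ insert z k₁').erase z ∪
                  (insert z k₁' ∪ insert z k₂').erase z).erase ccom ∪ insert z k₂').erase u) :=
                mem_erase.2 ⟨fun hh => hzu hh.symm,
                  mem_union_right _ (mem_insert_self _ _)⟩
              have hkΛ := mem_link.2 ⟨notMem_erase z _, by rwa [insert_erase hzmem]⟩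
              refine ⟨_, hkΛ, _, hkΛ, ?_, ?_, hone a₁ _ _ ?_ ?_⟩ <;>
                first
                | exact mem_erase.2 ⟨hza₁, mem_erase.2 ⟨fun hh => hua₁ hh.symm,
                    mem_union_left _ ha₁Z'⟩⟩
                | exact mem_erase.2 ⟨hza₂, mem_erase.2 ⟨ha₂u,
                    mem_union_left _ ha₂Z'⟩⟩
            · -- {z, a₁, u} edge
              have hzmem : z ∈ ((((insert z x ∪ insert z k₁').erase z ∪
                  (insert z k₁' ∪ insert z k₂').erase z).erase ccom ∪ insert z k₂').erase a₂) :=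
                mem_erase.2 ⟨fun hh => hza₂ hh.symm,
                  mem_union_right _ (mem_insert_self _ _)⟩
              have hkΛ := mem_link.2 ⟨notMem_erase z _, by rwa [insert_erase hzmem]⟩
              refine ⟨_, hkΛ, k₂', hk₂'Λ, ?_, ha₂k₂', hone u _ _ ?_ huk₂'⟩
              · exact mem_erase.2 ⟨hza₁, mem_erase.2 ⟨fun hh => ha₁₂ hh.symm,
                  mem_union_left _ ha₁Z'⟩⟩
              · exact mem_erase.2 ⟨hzu, mem_erase.2 ⟨fun hh => ha₂u hh.symm,
                  mem_union_left _ huZ'⟩⟩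


lemma mainstmt : ∀ ℓ : ℕ, 3 ≤ ℓ → MainStmt V ℓ := by
  intro ℓ hℓ
  induction ℓ, hℓ using Nat.le_induction with
  | base =>
      intro E hunif hdisp A₁ A₂ h₁ h₂ hint hconn
      exact main_aux (by omega) hunif hdisp (inner3 hunif hdisp) h₁ h₂ hint hconn
  | succ ℓ hℓ IH =>
      intro E hunif hdisp A₁ A₂ h₁ h₂ hint hconn
      exact main_aux (by omega) hunif hdisp (inner_of_ih hℓ IH hunif hdisp)
        h₁ h₂ hint hconn

end TW

theorem tight_walk_length_two {V : Type*} [DecidableEq V] (ℓ : ℕ) (hℓ : 3 ≤ ℓ)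
    (E : Finset (Finset V)) (hunif : ∀ e ∈ E, e.card = ℓ) (hdisp : Disperse ℓ E)
    (A₁ A₂ : Finset V) (h₁ : A₁.card = ℓ - 1) (h₂ : A₂.card = ℓ - 1)
    (hint : (A₁ ∩ A₂).card = ℓ - 2) (hconn : TightConn ℓ E A₁ A₂) :
    ∃ e₁ ∈ E, ∃ e₂ ∈ E, ℓ - 1 ≤ (e₁ ∩ e₂).card ∧ A₁ ⊆ e₁ ∧ A₂ ⊆ e₂ :=
  TW.mainstmt ℓ hℓ E hunif hdisp A₁ A₂ h₁ h₂ hint hconn
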